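/- arXiv:1806.05826 — 2 statements merged into one kernel-verified Lean document; each statement's English description precedes it below -/
import Mathlib

section
/- Under the ideal clustering assumption, the two-level iteration matrix T = (I − ω A)(I − P A_c^{-1} P^T A) with A = X^T X + β I, A_c = P^T A P, and P the normalized aggregation matrix, annihilates every eigenvector of X^T X with nonzero eigenvalue: if X^T X v = λ v with λ ≠ 0 then T v = 0. -/
open Matrix

/-- Under the ideal clustering assumption, the two-level
iteration matrix `T = (I − ω A)(I − P A_c⁻¹ Pᵀ A)` annihilates every
eigenvector of `Xᵀ X` with nonzero eigenvalue. -/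
theorem stmt12 (N F F_C : ℕ) (c : Fin F → Fin F_C) (hc : Function.Surjective c)
    (n : Fin F_C → ℕ)
    (hn : ∀ S, n S = (Finset.univ.filter fun i => c i = S).card)
    (x : Fin F_C → (Fin N → ℝ))
    (X : Matrix (Fin N) (Fin F) ℝ)
    (hX : ∀ i k, X k i = x (c i) k)
    (P : Matrix (Fin F) (Fin F_C) ℝ)
    (hP : ∀ i S, P i S = if c i = S then 1 / Real.sqrt (n S) else 0)
    (β : ℝ) (hβ : 0 < β) (ω : ℝ)
    (A : Matrix (Fin F) (Fin F) ℝ)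
    (hA : A = Xᵀ * X + β • (1 : Matrix (Fin F) (Fin F) ℝ))
    (Ac : Matrix (Fin F_C) (Fin F_C) ℝ) (hAc : Ac = Pᵀ * A * P)
    (T : Matrix (Fin F) (Fin F) ℝ)
    (hT : T = (1 - ω • A) * (1 - P * Ac⁻¹ * Pᵀ * A))
    (lam : ℝ) (hlam : lam ≠ 0) (v : Fin F → ℝ)
    (heig : (Xᵀ * X) *ᵥ v = lam • v) :
    T *ᵥ v = 0 := by
  by_cases hv : v = 0
  · rw [hv, Matrix.mulVec_zero]
  -- basic facts about n and P
  have hn_pos : ∀ S, 0 < (n S : ℝ) := by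
    intro S
    have : 0 < n S := by
      rw [hn]
      obtain ⟨i, hi⟩ := hc S
      exact Finset.card_pos.2 ⟨i, by simp [hi]⟩
    exact_mod_cast this
  have hsqrt : ∀ S, Real.sqrt (n S) * Real.sqrt (n S) = (n S : ℝ) :=
    fun S => Real.mul_self_sqrt (Nat.cast_nonneg _)
  -- PᵀP = 1
  have hPtP : Pᵀ * P = 1 := by
    ext S U
    rw [Matrix.mul_apply]
    by_cases hSU : S = U
    · subst hSU
      rw [Matrix.one_apply_eq]
      have hterm : ∀ i ∈ Finset.univ, Pᵀ S i * P i S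
          = if c i = S then ((n S : ℝ))⁻¹ else 0 := by
        intro i _
        rw [Matrix.transpose_apply, hP]
        split_ifs with h
        · rw [div_mul_div_comm, one_mul, hsqrt S, one_div]
        · ring
      rw [Finset.sum_congr rfl hterm, Finset.sum_ite, Finset.sum_const,
        Finset.sum_const_zero, add_zero, ← hn S, nsmul_eq_mul]
      exact mul_inv_cancel₀ (hn_pos S).ne'
    · rw [Matrix.one_apply_ne hSU]
      refine Finset.sum_eq_zero fun i _ => ?_
      rw [Matrix.transpose_apply, hP, hP]
      split_ifs with h1 h2
      · exact absurd (h1 ▸ h2) (by simpa [h1] using hSU)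
      · exact mul_zero _
      · exact zero_mul _
      · exact zero_mul _
  -- v is constant on clusters
  have hM : ∀ i j, (Xᵀ * X) i j = ∑ k, x (c i) k * x (c j) k := by
    intro i j
    rw [Matrix.mul_apply]
    exact Finset.sum_congr rfl fun k _ => by rw [Matrix.transpose_apply, hX, hX]
  have hvi : ∀ i, lam * v i = ∑ j, (∑ k, x (c i) k * x (c j) k) * v j := by
    intro i
    have h1 := congrFun heig i
    simp only [Pi.smul_apply, smul_eq_mul] at h1
    rw [← h1, Matrix.mulVec, dotProduct]
    exact Finset.sum_congr rfl fun j _ => by rw [hM]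
  have hconst : ∀ i j, c i = c j → v i = v j := by
    intro i j hij
    have h1 := hvi i
    have h2 := hvi j
    rw [hij] at h1
    exact mul_left_cancel₀ hlam (h1.trans h2.symm)
  -- P Pᵀ v = v
  have hPPt : ∀ i j, (P * Pᵀ) i j = if c j = c i then ((n (c i) : ℝ))⁻¹ else 0 := by
    intro i j
    rw [Matrix.mul_apply]
    rw [Finset.sum_eq_single (c i)]
    · rw [Matrix.transpose_apply, hP, hP, if_pos rfl]
      split_ifs with h
      · rw [div_mul_div_comm, one_mul, hsqrt, one_div]
      · exact mul_zero _
    · intro S _ hS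
      rw [hP, if_neg (fun h => hS h.symm), zero_mul]
    · intro h
      exact absurd (Finset.mem_univ _) h
  have hPPtv : (P * Pᵀ) *ᵥ v = v := by
    ext i
    rw [Matrix.mulVec, dotProduct]
    have hterm : ∀ j ∈ Finset.univ, (P * Pᵀ) i j * v j
        = if c j = c i then ((n (c i) : ℝ))⁻¹ * v i else 0 := by
      intro j _
      rw [hPPt]
      split_ifs with h
      · rw [hconst j i h]
      · exact zero_mul _
    rw [Finset.sum_congr rfl hterm, Finset.sum_ite, Finset.sum_const,
      Finset.sum_const_zero, add_zero, ← hn (c i), nsmul_eq_mul, ← mul_assoc,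
      mul_inv_cancel₀ (hn_pos (c i)).ne', one_mul]
  -- A v = (lam + β) v
  have hAv : A *ᵥ v = (lam + β) • v := by
    rw [hA, Matrix.add_mulVec, heig, Matrix.smul_mulVec, Matrix.one_mulVec,
      add_smul]
  -- lam ≥ 0
  have hlam_nonneg : 0 ≤ lam := by
    have key : lam * (v ⬝ᵥ v) = (X *ᵥ v) ⬝ᵥ (X *ᵥ v) := by
      have h1 : v ⬝ᵥ ((Xᵀ * X) *ᵥ v) = (X *ᵥ v) ⬝ᵥ (X *ᵥ v) := by
        rw [← Matrix.mulVec_mulVec, Matrix.dotProduct_mulVec, Matrix.vecMul_transpose]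
      rw [heig] at h1
      rw [← h1]
      simp [dotProduct_smul, smul_eq_mul]
    have hvv : 0 < v ⬝ᵥ v := by
      rcases lt_or_eq_of_le (Finset.sum_nonneg fun i _ => mul_self_nonneg (v i)) with h | h
      · exact h
      · exact absurd (dotProduct_self_eq_zero.1 h.symm) hv
    have h2 : 0 ≤ (X *ᵥ v) ⬝ᵥ (X *ᵥ v) := Finset.sum_nonneg fun i _ => mul_self_nonneg _
    nlinarith
  have hμ : lam + β ≠ 0 := by positivity
  -- Ac is positive definite
  have hAc2 : Ac = (X * P)ᴴ * (X * P) + β • (1 : Matrix (Fin F_C) (Fin F_C) ℝ) := by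
    rw [hAc, hA, Matrix.conjTranspose_eq_transpose_of_trivial, Matrix.transpose_mul]
    rw [Matrix.mul_add, Matrix.add_mul, Matrix.mul_smul, Matrix.smul_mul,
      Matrix.mul_one, hPtP]
    rw [Matrix.mul_assoc, Matrix.mul_assoc, Matrix.mul_assoc]
  have hβ1 : (β • (1 : Matrix (Fin F_C) (Fin F_C) ℝ)).PosDef := by
    rw [Matrix.posDef_iff_dotProduct_mulVec]
    constructor
    · simp [Matrix.IsHermitian]
    · intro y hy
      have : star y ⬝ᵥ ((β • (1 : Matrix (Fin F_C) (Fin F_C) ℝ)) *ᵥ y) = β * (y ⬝ᵥ y) := by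
        simp [Matrix.smul_mulVec, Matrix.one_mulVec, smul_eq_mul]
      rw [this]
      have hyy : 0 < y ⬝ᵥ y := by
        rcases lt_or_eq_of_le (Finset.sum_nonneg fun i _ => mul_self_nonneg (y i)) with h | h
        · exact h
        · exact absurd (dotProduct_self_eq_zero.1 h.symm) hy
      exact mul_pos hβ hyy
  have hAcPD : Ac.PosDef := by
    rw [hAc2]
    exact Matrix.PosDef.posSemidef_add (Matrix.posSemidef_conjTranspose_mul_self (X * P)) hβ1
  have hAcInv : Ac⁻¹ * Ac = 1 := Matrix.nonsing_inv_mul Ac hAcPD.det_pos.ne'.isUnit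
  -- eigen computation through the coarse space
  have hw : Ac *ᵥ (Pᵀ *ᵥ v) = (lam + β) • (Pᵀ *ᵥ v) := by
    rw [hAc, ← Matrix.mulVec_mulVec, ← Matrix.mulVec_mulVec,
      Matrix.mulVec_mulVec v P Pᵀ, hPPtv, hAv, Matrix.mulVec_smul]
  have hinvw : Ac⁻¹ *ᵥ (Pᵀ *ᵥ v) = (lam + β)⁻¹ • (Pᵀ *ᵥ v) := by
    have h1 : Ac⁻¹ *ᵥ (Ac *ᵥ (Pᵀ *ᵥ v)) = Pᵀ *ᵥ v := by
      rw [Matrix.mulVec_mulVec, hAcInv, Matrix.one_mulVec]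
    rw [hw, Matrix.mulVec_smul] at h1
    rw [eq_inv_smul_iff₀ hμ, h1]
  have hproj : (1 - P * Ac⁻¹ * Pᵀ * A) *ᵥ v = 0 := by
    rw [Matrix.sub_mulVec, Matrix.one_mulVec]
    have : (P * Ac⁻¹ * Pᵀ * A) *ᵥ v = v := by
      rw [← Matrix.mulVec_mulVec, ← Matrix.mulVec_mulVec, ← Matrix.mulVec_mulVec,
        hAv, Matrix.mulVec_smul, Matrix.mulVec_smul, hinvw, smul_smul,
        mul_inv_cancel₀ hμ, one_smul, Matrix.mulVec_mulVec, hPPtv]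
    rw [this, sub_self]
  rw [hT, ← Matrix.mulVec_mulVec, hproj, Matrix.mulVec_zero]
end

section
/- Let A ∈ ℝ^{F×F} be symmetric positive definite and P ∈ ℝ^{F×F_C} with P^T P = I. If the range of P is an invariant subspace of A (A·range(P) ⊆ range(P)), then the two-level iteration matrix T = (I − ω A)(I − P (P^T A P)^{-1} P^T A) satisfies: range(P) ⊆ ker(T), and the nonzero eigenvalues of T are exactly the values (1 − ω μ) for μ an eigenvalue of A restricted to the A-invariant complement range(P)^⊥. -/
open Matrix

/-- With `A` SPD, `P` with orthonormal columns and `range(P)` an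
`A`-invariant subspace, the two-level iteration matrix
`T = (I − ω A)(I − P (Pᵀ A P)⁻¹ Pᵀ A)` kills `range(P)`, and its nonzero
eigenvalues are exactly the values `1 − ω μ` for `μ` an eigenvalue of `A`
restricted to the `A`-invariant complement `range(P)ᗮ` (vectors `v` with
`Pᵀ v = 0`). -/
theorem stmt18 (F F_C : ℕ) (A : Matrix (Fin F) (Fin F) ℝ) (hA : A.PosDef)
    (P : Matrix (Fin F) (Fin F_C) ℝ)
    (hP : Pᵀ * P = (1 : Matrix (Fin F_C) (Fin F_C) ℝ))
    (hinv : ∀ w : Fin F_C → ℝ, ∃ u : Fin F_C → ℝ, A *ᵥ (P *ᵥ w) = P *ᵥ u)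
    (ω : ℝ) (hω : ω ≠ 0)
    (T : Matrix (Fin F) (Fin F) ℝ)
    (hT : T = (1 - ω • A) * (1 - P * (Pᵀ * A * P)⁻¹ * Pᵀ * A)) :
    (∀ w : Fin F_C → ℝ, T *ᵥ (P *ᵥ w) = 0) ∧
      (∀ lam : ℝ, lam ≠ 0 →
        ((∃ v : Fin F → ℝ, v ≠ 0 ∧ T *ᵥ v = lam • v) ↔
          (∃ (μ : ℝ) (v : Fin F → ℝ), v ≠ 0 ∧ Pᵀ *ᵥ v = 0 ∧
            A *ᵥ v = μ • v ∧ lam = 1 - ω * μ))) := by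
  classical
  -- `Pᵀ A P` is positive definite, hence invertible.
  have hPDsub' : (Pᴴ * A * P).PosDef := by
    refine PosDef.of_dotProduct_mulVec_pos ?_ ?_
    · exact isHermitian_conjTranspose_mul_mul P hA.isHermitian
    · intro x hx
      have hPx : P *ᵥ x ≠ 0 := by
        intro h
        apply hx
        have h1 : (Pᵀ * P) *ᵥ x = Pᵀ *ᵥ (P *ᵥ x) := (mulVec_mulVec x Pᵀ P).symm
        rw [hP, one_mulVec, h, mulVec_zero] at h1
        exact h1
      simpa only [star_mulVec, dotProduct_mulVec, vecMul_vecMul] using hA.dotProduct_mulVec_pos hPx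
  have hPDsub : (Pᵀ * A * P).PosDef := by
    rwa [conjTranspose_eq_transpose_of_trivial] at hPDsub'
  have hXinv : (Pᵀ * A * P)⁻¹ * (Pᵀ * A * P) = 1 :=
    nonsing_inv_mul _ hPDsub.det_pos.ne'.isUnit
  -- `(1 - Q) * P = 0`
  have hQP : (1 - P * (Pᵀ * A * P)⁻¹ * Pᵀ * A) * P = 0 := by
    have h1 : P * (Pᵀ * A * P)⁻¹ * Pᵀ * A * P = P := by
      have h2 : P * (Pᵀ * A * P)⁻¹ * Pᵀ * A * P
          = P * ((Pᵀ * A * P)⁻¹ * (Pᵀ * A * P)) := by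
        simp only [Matrix.mul_assoc]
      rw [h2, hXinv, Matrix.mul_one]
    rw [Matrix.sub_mul, Matrix.one_mul, h1, sub_self]
  have hTP : T * P = 0 := by
    rw [hT, Matrix.mul_assoc, hQP, Matrix.mul_zero]
  have hkill : ∀ w : Fin F_C → ℝ, T *ᵥ (P *ᵥ w) = 0 := by
    intro w
    rw [mulVec_mulVec, hTP, zero_mulVec]
  -- `A` maps the complement of `range P` into itself.
  choose uu huu using hinv
  set M : Matrix (Fin F_C) (Fin F_C) ℝ :=
    Matrix.of fun i j => uu (Pi.single j 1) i with hM
  have hAP : A * P = P * M := by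
    ext i j
    have h1 := congrFun (huu (Pi.single j 1)) i
    rw [mulVec_mulVec, mulVec_single_one] at h1
    simpa [Matrix.mul_apply, Matrix.mulVec, dotProduct, hM] using h1
  have hAsym : Aᵀ = A := by
    rw [← conjTranspose_eq_transpose_of_trivial]; exact hA.isHermitian
  have hPA : Pᵀ * A = Mᵀ * Pᵀ := by
    have h1 := congrArg Matrix.transpose hAP
    rwa [Matrix.transpose_mul, Matrix.transpose_mul, hAsym] at h1
  have hcomp : ∀ v : Fin F → ℝ, Pᵀ *ᵥ v = 0 → Pᵀ *ᵥ (A *ᵥ v) = 0 := by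
    intro v hv
    rw [mulVec_mulVec, hPA, ← mulVec_mulVec, hv, mulVec_zero]
  -- action of `T` on the complement
  have hTcomp : ∀ v : Fin F → ℝ, Pᵀ *ᵥ v = 0 → T *ᵥ v = v - ω • (A *ᵥ v) := by
    intro v hv
    rw [hT]
    have h2 : (1 - P * (Pᵀ * A * P)⁻¹ * Pᵀ * A) *ᵥ v = v := by
      rw [sub_mulVec, one_mulVec]
      have h3 : (P * (Pᵀ * A * P)⁻¹ * Pᵀ * A) *ᵥ v
          = (P * (Pᵀ * A * P)⁻¹) *ᵥ (Pᵀ *ᵥ (A *ᵥ v)) := by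
        simp only [mulVec_mulVec, Matrix.mul_assoc]
      rw [h3, hcomp v hv, mulVec_zero, sub_zero]
    rw [← mulVec_mulVec, h2, sub_mulVec, one_mulVec, smul_mulVec]
  refine ⟨hkill, fun lam hlam => ⟨?_, ?_⟩⟩
  · rintro ⟨v, hv0, hTv⟩
    set w : Fin F_C → ℝ := Pᵀ *ᵥ v with hw
    set u : Fin F → ℝ := v - P *ᵥ w with hu
    have hu0 : Pᵀ *ᵥ u = 0 := by
      rw [hu, mulVec_sub, mulVec_mulVec, hP, one_mulVec, sub_self]
    have hvdec : v = P *ᵥ w + u := by rw [hu]; abel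
    have hTu : T *ᵥ v = u - ω • (A *ᵥ u) := by
      conv_lhs => rw [hvdec]
      rw [mulVec_add, hkill w, zero_add, hTcomp u hu0]
    have hmain : lam • v = u - ω • (A *ᵥ u) := by rw [← hTv, hTu]
    have hwzero : w = 0 := by
      have h4 := congrArg (fun x => Pᵀ *ᵥ x) hmain
      simp only [mulVec_smul, mulVec_sub, hu0, hcomp u hu0, smul_zero, sub_zero,
        sub_self] at h4
      rcases smul_eq_zero.mp h4 with h | h
      · exact absurd h hlam
      · exact h
    have huv : u = v := by rw [hu, hwzero, mulVec_zero, sub_zero]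
    rw [huv] at hmain
    refine ⟨(1 - lam) / ω, v, hv0, by rw [← hw, hwzero], ?_, by field_simp; ring⟩
    have h5 : ω • (A *ᵥ v) = (1 - lam) • v := by
      ext i
      have h := congrFun hmain i
      simp only [Pi.smul_apply, Pi.sub_apply, smul_eq_mul, sub_mul, one_mul] at h ⊢
      linarith
    have h6 := congrArg (fun x => ω⁻¹ • x) h5
    simp only [smul_smul, inv_mul_cancel₀ hω, one_smul] at h6
    rw [h6, div_eq_inv_mul]
  · rintro ⟨μ, v, hv0, hvperp, hAv, hlμ⟩
    refine ⟨v, hv0, ?_⟩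
    rw [hTcomp v hvperp, hAv, hlμ, smul_smul, sub_smul, one_smul]
end
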